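/- Let f : ℂ → ℂ be holomorphic on an open set D with Im z ≠ 0 for z ∈ D. Define U : D → ℂ by U(z) = f'(z) - Im f(z) / Im z. Then U satisfies the PDE ∂U/∂z̄ = conj(U) / (z - z̄), where ∂/∂z̄ = (1/2)(∂/∂x + i ∂/∂y) and z̄ denotes the complex conjugate of z. -/

import Mathlib

/-- The Wirtinger derivative `∂U/∂z̄ = (1/2)(∂_x + i ∂_y) U`. -/
noncomputable def wirtingerZbar (U : ℂ → ℂ) (z : ℂ) : ℂ :=
  (1 / 2 : ℂ) * (fderiv ℝ U z 1 + Complex.I * fderiv ℝ U z Complex.I)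

lemma aux (b : ℂ) (x y s t : ℝ) (ht : t ≠ 0) :
    (1/2 : ℂ) * (b - ((s*(0*(-(t^2)⁻¹)) + t⁻¹*y : ℝ) : ℂ)
      + Complex.I * (Complex.I*b - ((s*(1*(-(t^2)⁻¹)) + t⁻¹*x : ℝ) : ℂ)))
    = ((x:ℂ) - (y:ℂ)*Complex.I - ((s*t⁻¹ : ℝ) : ℂ)) / (2*(t:ℂ)*Complex.I) := by
  have htC : (t:ℂ) ≠ 0 := by exact_mod_cast ht
  rw [eq_div_iff (by simp [htC, Complex.I_ne_zero])]
  push_cast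
  field_simp
  ring_nf
  have h3 : Complex.I ^ 3 = -Complex.I := by
    rw [pow_succ, Complex.I_sq]; ring
  rw [h3]
  field_simp
  ring_nf
  rw [Complex.I_sq]
  ring

/-- If `f` is holomorphic on an open set `D` on which `Im z ≠ 0`, then
`U = f' - Im f / Im z` solves the PDE `∂U/∂z̄ = conj(U)/(z - z̄)`. -/
theorem stmt7 (D : Set ℂ) (hD : IsOpen D) (f : ℂ → ℂ)
    (hf : ∀ z ∈ D, DifferentiableAt ℂ f z)
    (hz : ∀ z ∈ D, z.im ≠ 0) :
    let U : ℂ → ℂ := fun z => deriv f z - (((f z).im / z.im : ℝ) : ℂ)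
    ∀ z ∈ D, wirtingerZbar U z = (starRingEnd ℂ) (U z) / (z - (starRingEnd ℂ) z) := by
  intro U z hzD
  have ht : z.im ≠ 0 := hz z hzD
  -- deriv f is complex differentiable at z
  have hfD : DifferentiableOn ℂ f D := fun w hw => (hf w hw).differentiableWithinAt
  have hA : AnalyticOnNhd ℂ f D := hfD.analyticOnNhd hD
  have hderiv : DifferentiableAt ℂ (deriv f) z :=
    ((hA.deriv) z hzD).differentiableAt
  -- derivative of `deriv f` as a real map
  have h1 : HasFDerivAt (deriv f) ((fderiv ℂ (deriv f) z).restrictScalars ℝ) z :=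
    hderiv.hasFDerivAt.restrictScalars ℝ
  -- derivative of `fun w => (f w).im`
  have h2 : HasFDerivAt (fun w => (f w).im)
      (Complex.imCLM.comp ((fderiv ℂ f z).restrictScalars ℝ)) z :=
    (Complex.imCLM.hasFDerivAt).comp z ((hf z hzD).hasFDerivAt.restrictScalars ℝ)
  -- derivative of `fun w => (w.im)⁻¹`
  have h3 : HasFDerivAt (fun w : ℂ => (w.im)⁻¹)
      ((ContinuousLinearMap.smulRight (1 : ℝ →L[ℝ] ℝ) (-(z.im ^ 2)⁻¹)).comp Complex.imCLM) z :=
    (hasFDerivAt_inv ht).comp z Complex.imCLM.hasFDerivAt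
  -- derivative of the quotient as a product
  have h4 := h2.mul h3
  -- compose with ofReal
  have h5 := Complex.ofRealCLM.hasFDerivAt.comp z h4
  have h6 := h1.sub h5
  have hUeq : U = fun x => deriv f x - (⇑Complex.ofRealCLM ∘ fun y => (f y).im * y.im⁻¹) x := by
    funext w
    show deriv f w - (((f w).im / w.im : ℝ) : ℂ) = _
    simp [div_eq_mul_inv]
  rw [hUeq] at *
  have hfd : fderiv ℝ (fun x => deriv f x - (⇑Complex.ofRealCLM ∘ fun y => (f y).im * y.im⁻¹) x) z = _ := h6.fderiv
  rw [wirtingerZbar, hfd]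
  have hf1 : (fderiv ℂ f z) 1 = deriv f z := by
    rw [← fderiv_apply_one_eq_deriv]
  have hfI : (fderiv ℂ f z) Complex.I = Complex.I * deriv f z := by
    have := (fderiv ℂ f z).map_smul Complex.I (1 : ℂ)
    simpa [hf1, smul_eq_mul] using this
  have hg1 : (fderiv ℂ (deriv f) z) Complex.I = Complex.I * (fderiv ℂ (deriv f) z) 1 := by
    have := (fderiv ℂ (deriv f) z).map_smul Complex.I (1 : ℂ)
    simpa [smul_eq_mul] using this
  simp only [ContinuousLinearMap.sub_apply, ContinuousLinearMap.comp_apply,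
    ContinuousLinearMap.add_apply, ContinuousLinearMap.smul_apply,
    ContinuousLinearMap.coe_restrictScalars', ContinuousLinearMap.mul_apply',
    ContinuousLinearMap.smulRight_apply, ContinuousLinearMap.one_apply,
    Complex.imCLM_apply, Complex.ofRealCLM_apply, Complex.I_im, Complex.one_im,
    Function.comp, smul_eq_mul, hf1, hfI, hg1]
  set b := (fderiv ℂ (deriv f) z) 1 with hb
  set a := deriv f z with ha
  have hconj : (starRingEnd ℂ) (a - (((f z).im * (z.im)⁻¹ : ℝ) : ℂ))
      = (a.re : ℂ) - (a.im : ℂ) * Complex.I - (((f z).im * (z.im)⁻¹ : ℝ) : ℂ) := by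
    rw [map_sub, Complex.conj_ofReal]
    congr 1
    rw [Complex.ext_iff]; simp
  have hzz : z - (starRingEnd ℂ) z = 2 * (z.im : ℂ) * Complex.I := by
    rw [Complex.ext_iff]; simp; ring
  rw [hconj, hzz]
  rw [show (Complex.I * a).im = a.re by simp]
  exact aux b a.re a.im (f z).im z.im ht
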